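/- Interpolation inequality for the inverse hyperbolic cosine (Claim C.1): For all real numbers a, b with 0 ≤ a ≤ b and b > 0, and every λ ∈ [0,1], one has arcosh((1−λ)·cosh(a) + λ·cosh(b)) ≤ (sinh(b/2)/(b/2)) · sqrt((1−λ)·a² + λ·b²). -/

import Mathlib

open Real

noncomputable section

/-- The inverse hyperbolic cosine: `arcosh x = log (x + sqrt (x² - 1))` for
`x ≥ 1`, so that `cosh (arcosh x) = x`. -/
def arcosh (x : ℝ) : ℝ := Real.log (x + Real.sqrt (x ^ 2 - 1))

lemma cosh_eq_one_add_sq (x : ℝ) :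
    Real.cosh x = 1 + 2 * Real.sinh (x / 2) ^ 2 := by
  have h := Real.cosh_two_mul (x / 2)
  have h2 : 2 * (x / 2) = x := by ring
  rw [h2] at h
  have := Real.cosh_sq (x / 2)
  linarith

lemma sinh_le_mul_cosh {x : ℝ} (hx : 0 ≤ x) : Real.sinh x ≤ x * Real.cosh x := by
  have hmono : MonotoneOn (fun t => t * Real.cosh t - Real.sinh t) (Set.Icc 0 x) := by
    apply monotoneOn_of_deriv_nonneg (convex_Icc 0 x)
    · exact (Continuous.continuousOn (by fun_prop))
    · intro t ht
      have hd : HasDerivAt (fun t => t * Real.cosh t - Real.sinh t)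
          (1 * Real.cosh t + t * Real.sinh t - Real.cosh t) t :=
        ((hasDerivAt_id t).mul (Real.hasDerivAt_cosh t)).sub (Real.hasDerivAt_sinh t)
      exact hd.differentiableAt.differentiableWithinAt
    · intro t ht
      rw [interior_Icc] at ht
      have hd : HasDerivAt (fun t => t * Real.cosh t - Real.sinh t)
          (1 * Real.cosh t + t * Real.sinh t - Real.cosh t) t :=
        ((hasDerivAt_id t).mul (Real.hasDerivAt_cosh t)).sub (Real.hasDerivAt_sinh t)
      rw [hd.deriv]
      have h1 : 0 ≤ Real.sinh t := Real.sinh_nonneg_iff.mpr ht.1.le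
      nlinarith [ht.1]
  have h0 : (0 : ℝ) ∈ Set.Icc 0 x := ⟨le_refl _, hx⟩
  have hxm : x ∈ Set.Icc 0 x := ⟨hx, le_refl _⟩
  have := hmono h0 hxm hx
  simp at this
  linarith

lemma sinh_ratio_mono {x y : ℝ} (hx : 0 ≤ x) (hxy : x ≤ y) :
    y * Real.sinh x ≤ x * Real.sinh y := by
  have hmono : MonotoneOn (fun t => x * Real.sinh t - Real.sinh x * t) (Set.Icc x y) := by
    apply monotoneOn_of_deriv_nonneg (convex_Icc x y)
    · exact (Continuous.continuousOn (by fun_prop))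
    · intro t ht
      have hd : HasDerivAt (fun t => x * Real.sinh t - Real.sinh x * t)
          (x * Real.cosh t - Real.sinh x * 1) t :=
        ((Real.hasDerivAt_sinh t).const_mul x).sub ((hasDerivAt_id t).const_mul _)
      exact hd.differentiableAt.differentiableWithinAt
    · intro t ht
      rw [interior_Icc] at ht
      have hd : HasDerivAt (fun t => x * Real.sinh t - Real.sinh x * t)
          (x * Real.cosh t - Real.sinh x * 1) t :=
        ((Real.hasDerivAt_sinh t).const_mul x).sub ((hasDerivAt_id t).const_mul _)
      rw [hd.deriv]
      have hc : Real.cosh x ≤ Real.cosh t := by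
        rw [Real.cosh_le_cosh, abs_of_nonneg hx, abs_of_nonneg (hx.trans ht.1.le)]
        exact ht.1.le
      have hs : Real.sinh x ≤ x * Real.cosh x := sinh_le_mul_cosh hx
      nlinarith [hx, hc, hs]
  have h0 : x ∈ Set.Icc x y := ⟨le_refl _, hxy⟩
  have hxm : y ∈ Set.Icc x y := ⟨hxy, le_refl _⟩
  have := hmono h0 hxm hxy
  simp only at this
  nlinarith [this]

lemma arcosh_le {y c : ℝ} (hy : 1 ≤ y) (hc : 0 ≤ c) (h : y ≤ Real.cosh c) :
    _root_.arcosh y ≤ c := by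
  unfold _root_.arcosh
  have hs : Real.sqrt (y ^ 2 - 1) ≤ Real.sinh c := by
    have h1 : y ^ 2 - 1 ≤ Real.sinh c ^ 2 := by
      rw [Real.sinh_sq]
      have : y ^ 2 ≤ Real.cosh c ^ 2 := by
        apply pow_le_pow_left₀ (by linarith) h
      linarith
    have h2 : 0 ≤ Real.sinh c := Real.sinh_nonneg_iff.mpr hc
    calc Real.sqrt (y ^ 2 - 1) ≤ Real.sqrt (Real.sinh c ^ 2) := Real.sqrt_le_sqrt h1
      _ = Real.sinh c := by rw [Real.sqrt_sq h2]
  have hpos : 0 < y + Real.sqrt (y ^ 2 - 1) := by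
    have := Real.sqrt_nonneg (y ^ 2 - 1)
    linarith
  calc Real.log (y + Real.sqrt (y ^ 2 - 1)) ≤ Real.log (Real.cosh c + Real.sinh c) := by
        apply Real.log_le_log hpos; linarith
    _ = Real.log (Real.exp c) := by rw [Real.cosh_add_sinh]
    _ = c := Real.log_exp c

/-- Interpolation inequality for the inverse hyperbolic cosine (Claim C.1): for
`0 ≤ a ≤ b`, `b > 0` and `λ ∈ [0,1]`,
`arcosh((1-λ) cosh a + λ cosh b) ≤ (sinh(b/2)/(b/2)) √((1-λ) a² + λ b²)`. -/
theorem arcosh_interpolation_inequality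
    (a b lam : ℝ) (ha : 0 ≤ a) (hab : a ≤ b) (hb : 0 < b)
    (hlam₀ : 0 ≤ lam) (hlam₁ : lam ≤ 1) :
    _root_.arcosh ((1 - lam) * Real.cosh a + lam * Real.cosh b) ≤
      (Real.sinh (b / 2) / (b / 2)) *
        Real.sqrt ((1 - lam) * a ^ 2 + lam * b ^ 2) := by
  set M : ℝ := Real.sinh (b / 2) / (b / 2) with hM
  have hb2 : 0 < b / 2 := by linarith
  have hM0 : 0 ≤ M := div_nonneg (Real.sinh_nonneg_iff.mpr hb2.le) hb2.le
  set q : ℝ := (1 - lam) * a ^ 2 + lam * b ^ 2 with hq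
  have hq0 : 0 ≤ q := by nlinarith [sq_nonneg a, sq_nonneg b]
  set s : ℝ := Real.sqrt q with hs
  have hs0 : 0 ≤ s := Real.sqrt_nonneg q
  have hssq : s ^ 2 = q := Real.sq_sqrt hq0
  -- sinh(b/2) = (b/2) * M
  have hMb : Real.sinh (b / 2) = (b / 2) * M := by
    rw [hM]; field_simp
  -- sinh(a/2) ≤ (a/2) * M
  have hMa : Real.sinh (a / 2) ≤ (a / 2) * M := by
    have h := sinh_ratio_mono (x := a / 2) (y := b / 2) (by linarith) (by linarith)
    have heq : a / 2 * (Real.sinh (b / 2) / (b / 2)) =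
        a / 2 * Real.sinh (b / 2) / (b / 2) := by ring
    rw [hM, heq, le_div_iff₀ hb2]
    nlinarith
  have hsa0 : 0 ≤ Real.sinh (a / 2) := Real.sinh_nonneg_iff.mpr (by linarith)
  have hy1 : 1 ≤ (1 - lam) * Real.cosh a + lam * Real.cosh b := by
    nlinarith [Real.one_le_cosh a, Real.one_le_cosh b]
  apply arcosh_le hy1 (mul_nonneg hM0 hs0)
  -- show y ≤ cosh (M * s)
  rw [cosh_eq_one_add_sq (M * s), cosh_eq_one_add_sq a, cosh_eq_one_add_sq b]
  have hself : M * s / 2 ≤ Real.sinh (M * s / 2) :=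
    Real.self_le_sinh_iff.mpr (by positivity)
  have hsq : (M * s / 2) ^ 2 ≤ Real.sinh (M * s / 2) ^ 2 := by
    nlinarith [mul_nonneg hM0 hs0]
  have ha2 : Real.sinh (a / 2) ^ 2 ≤ (a / 2 * M) ^ 2 := by nlinarith
  have hb2' : Real.sinh (b / 2) ^ 2 = (b / 2 * M) ^ 2 := by rw [hMb]
  have key : (1 - lam) * (a / 2 * M) ^ 2 + lam * (b / 2 * M) ^ 2 = (M * s / 2) ^ 2 := by
    have : (M * s / 2) ^ 2 = M ^ 2 * s ^ 2 / 4 := by ring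
    rw [this, hssq, hq]; ring
  nlinarith [hsq, ha2, hb2', key, hlam₀, hlam₁]

end
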